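/- Let k be a field and A = k[x,y]. Define the A-linear maps d_2 : A → A^3 by d_2(1) = (−x·y, x^2, −y), and d_1 : A^3 → A^3 by d_1(e_1) = (x, −x, 0), d_1(e_2) = (y, 0, −y), d_1(e_3) = (0, x^2, −x^2). Then d_2 is injective and the image of d_2 equals the kernel of d_1; that is, 0 → A →^{d_2} A^3 →^{d_1} A^3 is exact. -/

import Mathlib

open MvPolynomial

noncomputable section

/-- `A = k[x,y]`. -/
abbrev A2 (k : Type) [Field k] := MvPolynomial (Fin 2) k

/-- The matrix of `d₁ : A³ → A³` with columns `(x,−x,0)`, `(y,0,−y)`, `(0,x²,−x²)`. -/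
def d1Matrix (k : Type) [Field k] : Matrix (Fin 3) (Fin 3) (A2 k) :=
  Matrix.of
    ![![X 0, X 1, 0],
      ![-(X 0), 0, (X 0)^2],
      ![0, -(X 1), -((X 0)^2)]]

/-- `d₂ : A → A³`, `1 ↦ (−xy, x², −y)`. -/
def d2Map (k : Type) [Field k] : A2 k →ₗ[A2 k] (Fin 3 → A2 k) :=
  LinearMap.toSpanSingleton (A2 k) (Fin 3 → A2 k) ![-(X 0 * X 1), (X 0)^2, -(X 1)]

lemma primeX1 (k : Type) [Field k] : Prime (X 1 : A2 k) := by
  set e := ((renameEquiv k (Equiv.swap (0 : Fin 2) 1)).trans (finSuccEquiv k 1)).toMulEquiv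
  rw [← MulEquiv.prime_iff e]
  have he : e (X 1 : A2 k) = Polynomial.X := by
    simp [e, renameEquiv_apply, rename_X, Equiv.swap_apply_right, finSuccEquiv_X_zero]
  rw [he]
  exact Polynomial.prime_X

/-- The sequence `0 → A →^{d₂} A³ →^{d₁} A³` is exact: `d₂` is injective and
`im d₂ = ker d₁`, where `d₂(1) = (−xy, x², −y)` and `d₁` has columns
`(x,−x,0)`, `(y,0,−y)`, `(0,x²,−x²)`. -/
theorem d2_injective_and_range_eq_ker (k : Type) [Field k] :
    Function.Injective (d2Map k) ∧
      LinearMap.range (d2Map k) = LinearMap.ker (Matrix.toLin' (d1Matrix k)) := by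
  constructor
  · intro a b h
    have h2 := congrFun h 2
    simp [d2Map, LinearMap.toSpanSingleton_apply, Pi.smul_apply, smul_eq_mul] at h2
    exact h2
  · ext w
    simp only [LinearMap.mem_range, LinearMap.mem_ker, Matrix.toLin'_apply, d2Map,
      LinearMap.toSpanSingleton_apply]
    constructor
    · rintro ⟨t, rfl⟩
      funext i
      fin_cases i <;>
        simp [d1Matrix, Matrix.mulVec, dotProduct, Fin.sum_univ_three, smul_eq_mul] <;>
        ring
    · intro hw
      have h1 := congrFun hw 1
      have h2 := congrFun hw 2
      simp [d1Matrix, Matrix.mulVec, dotProduct, Fin.sum_univ_three] at h1 h2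
      have ha : w 0 = X 0 * w 2 :=
        mul_left_cancel₀ (X_ne_zero (R := k) 0) (by linear_combination -h1)
      have hdvd : (X 1 : A2 k) ∣ (X 0)^2 * w 2 := ⟨-w 1, by linear_combination -h2⟩
      rcases (primeX1 k).dvd_mul.mp hdvd with h | h
      · exfalso
        have := X_dvd_X.mp ((primeX1 k).dvd_of_dvd_pow h)
        exact absurd this (by decide)
      · obtain ⟨s, hs⟩ := h
        have hb : w 1 = -((X 0)^2 * s) :=
          mul_left_cancel₀ (X_ne_zero (R := k) 1) (by linear_combination -h2 - (X 0)^2 * hs)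
        refine ⟨-s, funext fun i => ?_⟩
        fin_cases i <;> simp [smul_eq_mul]
        · linear_combination -ha - X 0 * hs
        · linear_combination -hb
        · linear_combination -hs

end
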